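/- Let p be an even integer with p ≥ 4 and let G be a graph of order p+3 not containing B_p with exactly p(p+4)/2 edges. Then G is isomorphic to (3K_1) ∨ (K_p − PM) or to (complement of P_5) ∨ (K_{p−2} − PM). -/

import Mathlib

open SimpleGraph

/-- A graph contains the book `B_p` iff some edge has at least `p` common neighbors. -/
def SimpleGraph.ContainsBook {V : Type*} (G : SimpleGraph V) (p : ℕ) : Prop :=
  ∃ x y, G.Adj x y ∧ p ≤ (G.commonNeighbors x y).ncard

/-- The Turán number `ex(n, B_p)`: the maximum number of edges of a simple graph
on `n` vertices containing no book `B_p`. -/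
noncomputable def bookTuranNumber (n p : ℕ) : ℕ :=
  sSup {e : ℕ | ∃ G : SimpleGraph (Fin n), ¬ G.ContainsBook p ∧ G.edgeSet.ncard = e}

/-- The disjoint union of `m` copies of the complete graph `K_k`. -/
def unionComplete (m k : ℕ) : SimpleGraph (Fin m × Fin k) :=
  SimpleGraph.fromRel fun a b => a.1 = b.1

/-- The join `G ∨ H` of two graphs. -/
def SimpleGraph.join {α β : Type*} (G : SimpleGraph α) (H : SimpleGraph β) :
    SimpleGraph (α ⊕ β) := (Gᶜ ⊕g Hᶜ)ᶜ

/-- A disjoint union of cycles `C_{i 0} + ⋯ + C_{i (t-1)}`. -/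
def cycleFamily (t : ℕ) (i : Fin t → ℕ) : SimpleGraph (Σ j : Fin t, Fin (i j)) :=
  SimpleGraph.fromRel fun a b => ∃ h : a.1 = b.1, (SimpleGraph.cycleGraph (i b.1)).Adj (h ▸ a.2) b.2


open Finset

lemma matching_equiv {W : Type*} [Fintype W] [DecidableEq W] (f : W → W)
    (hf : ∀ x, f x ≠ x) (hff : ∀ x, f (f x) = x) (m : ℕ) (hcard : Fintype.card W = 2 * m) :
    ∃ e : W ≃ Fin m × Fin 2, ∀ x y, ((e x).1 = (e y).1 ∧ x ≠ y) ↔ y = f x := by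
  classical
  let s : Setoid W := ⟨fun x y => y = x ∨ y = f x, by
    refine ⟨fun x => Or.inl rfl, ?_, ?_⟩
    · rintro x y (rfl | rfl) <;> simp [hff]
    · rintro x y z (rfl | rfl) (rfl | rfl) <;> simp [hff]⟩
  letI : DecidableEq (Quotient s) := Classical.decEq _
  have hmkf : ∀ x : W, (⟦f x⟧ : Quotient s) = ⟦x⟧ := by
    intro x
    exact Quotient.sound (Or.inr (hff x).symm)
  have hout : ∀ x : W, x = (⟦x⟧ : Quotient s).out ∨ x = f (⟦x⟧ : Quotient s).out :=
    fun x => Quotient.mk_out x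
  let g : W ≃ Quotient s × Fin 2 :=
    { toFun := fun x => (⟦x⟧, if x = (⟦x⟧ : Quotient s).out then 0 else 1)
      invFun := fun q => if q.2 = 0 then q.1.out else f q.1.out
      left_inv := by
        intro x
        show (if (if x = (⟦x⟧ : Quotient s).out then (0 : Fin 2) else 1) = 0
            then (⟦x⟧ : Quotient s).out else f (⟦x⟧ : Quotient s).out) = x
        rcases hout x with h | h
        · rw [if_pos h, if_pos rfl]
          exact h.symm
        · have hne : x ≠ (⟦x⟧ : Quotient s).out := by
            intro hx; exact hf _ (h.symm.trans hx)
          rw [if_neg hne, if_neg (by decide : ¬ (1 : Fin 2) = 0)]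
          exact h.symm
      right_inv := by
        rintro ⟨q, i⟩
        have hq : (⟦q.out⟧ : Quotient s) = q := Quotient.out_eq q
        have hi : i = 0 ∨ i = 1 := by omega
        rcases hi with rfl | rfl
        · show ((fun x => ((⟦x⟧ : Quotient s), if x = (⟦x⟧ : Quotient s).out then (0 : Fin 2) else 1))
            (if (0 : Fin 2) = 0 then q.out else f q.out)) = (q, 0)
          rw [if_pos rfl]
          refine Prod.ext hq ?_
          show (if q.out = (⟦q.out⟧ : Quotient s).out then (0 : Fin 2) else 1) = 0
          rw [if_pos (by rw [hq])]
        · have h1 : (⟦f q.out⟧ : Quotient s) = q := by rw [hmkf]; exact Quotient.out_eq q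
          show ((fun x => ((⟦x⟧ : Quotient s), if x = (⟦x⟧ : Quotient s).out then (0 : Fin 2) else 1))
            (if (1 : Fin 2) = 0 then q.out else f q.out)) = (q, 1)
          rw [if_neg (by decide : ¬ (1 : Fin 2) = 0)]
          refine Prod.ext h1 ?_
          show (if f q.out = (⟦f q.out⟧ : Quotient s).out then (0 : Fin 2) else 1) = 1
          rw [if_neg (by rw [h1]; exact hf _)] }
  have hcardQ : Fintype.card (Quotient s) = m := by
    have := Fintype.card_congr g
    simp [Fintype.card_prod] at this
    omega
  let eQ : Quotient s ≃ Fin m := Fintype.equivFinOfCardEq hcardQ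
  refine ⟨g.trans (eQ.prodCongr (Equiv.refl _)), ?_⟩
  intro x y
  have he1 : ∀ z : W, ((g.trans (eQ.prodCongr (Equiv.refl (Fin 2)))) z).1 = eQ ⟦z⟧ := fun z => rfl
  rw [he1, he1]
  constructor
  · rintro ⟨h1, h2⟩
    have : (⟦x⟧ : Quotient s) = ⟦y⟧ := eQ.injective h1
    have := Quotient.exact this
    rcases this with h | h
    · exact absurd h.symm h2
    · exact h
  · rintro rfl
    exact ⟨by rw [hmkf], fun h => hf x h.symm⟩


lemma assemble {V : Type*} [Fintype V] [DecidableEq V] (H : SimpleGraph V)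
    {n m : ℕ} (K : SimpleGraph (Fin n)) (x : Fin n → V) (hx : Function.Injective x)
    (hadj : ∀ i j, H.Adj (x i) (x j) ↔ K.Adj i j)
    (hclosed : ∀ i v, H.Adj (x i) v → ∃ j, v = x j)
    (hpend : ∀ v : V, (∀ i, v ≠ x i) → ∃ u : V, (∀ i, u ≠ x i) ∧ H.neighborSet v = {u})
    (hcard : Fintype.card V = n + 2 * m) :
    Nonempty (H ≃g K ⊕g unionComplete m 2) := by
  classical
  set p' : V → Prop := fun v => ∃ i, x i = v with hp'
  have hpend' : ∀ v : {v : V // ¬ p' v}, ∃ u : V, (∀ i, u ≠ x i) ∧ H.neighborSet v.1 = {u} :=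
    fun v => hpend v.1 (fun i hi => v.2 ⟨i, hi.symm⟩)
  choose u hu hN using hpend'
  let f : {v : V // ¬ p' v} → {v : V // ¬ p' v} :=
    fun v => ⟨u v, fun ⟨i, hi⟩ => hu v i hi.symm⟩
  have hAdjW : ∀ (v : {v : V // ¬ p' v}) (w : V), H.Adj v.1 w ↔ w = u v := by
    intro v w
    rw [← SimpleGraph.mem_neighborSet, hN v, Set.mem_singleton_iff]
  have hfne : ∀ v, f v ≠ v := by
    intro v hv
    have : H.Adj v.1 (u v) := (hAdjW v (u v)).mpr rfl
    rw [show u v = v.1 from congrArg Subtype.val hv] at this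
    exact H.loopless.irrefl _ this
  have hff : ∀ v, f (f v) = v := by
    intro v
    have h1 : H.Adj v.1 (u v) := (hAdjW v (u v)).mpr rfl
    have h2 : H.Adj (f v).1 v.1 := h1.symm
    have := (hAdjW (f v) v.1).mp h2
    exact Subtype.ext this.symm
  have hcardW : Fintype.card {v : V // ¬ p' v} = 2 * m := by
    have h1 : Fintype.card {v : V // p' v} = n := by
      have : Fintype.card {v : V // p' v} = Fintype.card (Set.range x) := by
        apply Fintype.card_congr
        exact Equiv.subtypeEquivRight (fun v => Iff.rfl)
      rw [this, Set.card_range_of_injective hx, Fintype.card_fin]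
    have h2 := Fintype.card_subtype_compl p'
    omega
  obtain ⟨e2, he2⟩ := matching_equiv f hfne hff m hcardW
  let e1 : {v : V // p' v} ≃ Fin n :=
    (Equiv.subtypeEquivRight (fun v => Iff.rfl : ∀ v, p' v ↔ v ∈ Set.range x)).trans
      (Equiv.ofInjective x hx).symm
  have he1 : ∀ (i : Fin n) (h : p' (x i)), e1 ⟨x i, h⟩ = i := by
    intro i h
    have : (⟨x i, h⟩ : {v : V // p' v}) = e1.symm i := by
      apply Subtype.ext
      rfl
    rw [this, Equiv.apply_symm_apply]
  let e : V ≃ (Fin n) ⊕ (Fin m × Fin 2) :=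
    (Equiv.sumCompl p').symm.trans (Equiv.sumCongr e1 e2)
  refine ⟨⟨e, ?_⟩⟩
  intro a b
  by_cases ha : p' a <;> by_cases hb : p' b
  · obtain ⟨i, rfl⟩ := ha
    obtain ⟨j, rfl⟩ := hb
    have hea : e (x i) = Sum.inl i := by
      show (Equiv.sumCongr e1 e2) ((Equiv.sumCompl p').symm (x i)) = _
      rw [Equiv.sumCompl_symm_apply_of_pos ⟨i, rfl⟩]
      simp [he1]
    have heb : e (x j) = Sum.inl j := by
      show (Equiv.sumCongr e1 e2) ((Equiv.sumCompl p').symm (x j)) = _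
      rw [Equiv.sumCompl_symm_apply_of_pos ⟨j, rfl⟩]
      simp [he1]
    rw [hea, heb]
    simp only [SimpleGraph.sum_adj]
    exact (hadj i j).symm
  · obtain ⟨i, rfl⟩ := ha
    have hea : e (x i) = Sum.inl i := by
      show (Equiv.sumCongr e1 e2) ((Equiv.sumCompl p').symm (x i)) = _
      rw [Equiv.sumCompl_symm_apply_of_pos ⟨i, rfl⟩]
      simp [he1]
    have heb : e b = Sum.inr (e2 ⟨b, hb⟩) := by
      show (Equiv.sumCongr e1 e2) ((Equiv.sumCompl p').symm b) = _
      rw [Equiv.sumCompl_symm_apply_of_neg hb]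
      simp
    rw [hea, heb]
    simp only [SimpleGraph.sum_adj]
    constructor
    · intro h; exact h.elim
    · intro h
      obtain ⟨j, rfl⟩ := hclosed i b h
      exact absurd ⟨j, rfl⟩ hb
  · obtain ⟨j, rfl⟩ := hb
    have hea : e a = Sum.inr (e2 ⟨a, ha⟩) := by
      show (Equiv.sumCongr e1 e2) ((Equiv.sumCompl p').symm a) = _
      rw [Equiv.sumCompl_symm_apply_of_neg ha]
      simp
    have heb : e (x j) = Sum.inl j := by
      show (Equiv.sumCongr e1 e2) ((Equiv.sumCompl p').symm (x j)) = _
      rw [Equiv.sumCompl_symm_apply_of_pos ⟨j, rfl⟩]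
      simp [he1]
    rw [hea, heb]
    simp only [SimpleGraph.sum_adj]
    constructor
    · intro h; exact h.elim
    · intro h
      obtain ⟨i, rfl⟩ := hclosed j a h.symm
      exact absurd ⟨i, rfl⟩ ha
  · have hea : e a = Sum.inr (e2 ⟨a, ha⟩) := by
      show (Equiv.sumCongr e1 e2) ((Equiv.sumCompl p').symm a) = _
      rw [Equiv.sumCompl_symm_apply_of_neg ha]
      simp
    have heb : e b = Sum.inr (e2 ⟨b, hb⟩) := by
      show (Equiv.sumCongr e1 e2) ((Equiv.sumCompl p').symm b) = _
      rw [Equiv.sumCompl_symm_apply_of_neg hb]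
      simp
    rw [hea, heb]
    simp only [SimpleGraph.sum_adj, unionComplete, SimpleGraph.fromRel_adj]
    rw [show ((e2 ⟨a, ha⟩).1 = (e2 ⟨b, hb⟩).1 ∨ (e2 ⟨b, hb⟩).1 = (e2 ⟨a, ha⟩).1) ↔
        ((e2 ⟨a, ha⟩).1 = (e2 ⟨b, hb⟩).1) from ⟨fun h => h.elim id Eq.symm, Or.inl⟩]
    rw [and_comm]
    rw [ne_eq, Equiv.apply_eq_iff_eq, ← ne_eq]
    rw [he2 ⟨a, ha⟩ ⟨b, hb⟩]
    rw [hAdjW ⟨a, ha⟩ b]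
    constructor
    · intro h
      exact congrArg Subtype.val h
    · intro h
      exact Subtype.ext h


lemma pendant_neighbor {V : Type*} [Fintype V] [DecidableEq V] (H : SimpleGraph V)
    [DecidableRel H.Adj] {v : V} (h : H.degree v = 1) :
    ∃ a, H.neighborFinset v = {a} := Finset.card_eq_one.mp h

lemma nf_singleton_adj {V : Type*} [Fintype V] [DecidableEq V] (H : SimpleGraph V)
    [DecidableRel H.Adj] {v a w : V} (h : H.neighborFinset v = {a}) :
    H.Adj v w ↔ w = a := by
  rw [← SimpleGraph.mem_neighborFinset, h, Finset.mem_singleton]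

lemma triangle_case (p : ℕ) (hp : 4 ≤ p) (hev : Even p) {V : Type*} [Fintype V] [DecidableEq V]
    (hV : Fintype.card V = p + 3) (H : SimpleGraph V) [DecidableRel H.Adj]
    (a b c : V) (hab : a ≠ b) (hac : a ≠ c) (hbc : b ≠ c)
    (hNa : H.neighborFinset a = {b, c}) (hNb : H.neighborFinset b = {a, c})
    (hNc : H.neighborFinset c = {a, b})
    (hout : ∀ v, v ≠ a → v ≠ b → v ≠ c → H.degree v = 1) :
    Nonempty (H ≃g (⊤ : SimpleGraph (Fin 3)) ⊕g unionComplete (p / 2) 2) := by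
  classical
  have hAab : H.Adj a b := by rw [← SimpleGraph.mem_neighborFinset, hNa]; simp
  have hAac : H.Adj a c := by rw [← SimpleGraph.mem_neighborFinset, hNa]; simp
  have hAbc : H.Adj b c := by rw [← SimpleGraph.mem_neighborFinset, hNb]; simp
  set x : Fin 3 → V := ![a, b, c] with hx
  have hx0 : x 0 = a := rfl
  have hx1 : x 1 = b := rfl
  have hx2 : x 2 = c := rfl
  have hinj : Function.Injective x := by
    intro i j hij
    fin_cases i <;> fin_cases j <;> simp_all [hx0, hx1, hx2] <;>
      first
        | rfl
        | exact absurd hij hab | exact absurd hij hab.symm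
        | exact absurd hij hac | exact absurd hij hac.symm
        | exact absurd hij hbc | exact absurd hij hbc.symm
  refine assemble H _ x hinj ?_ ?_ ?_ ?_
  · intro i j
    fin_cases i <;> fin_cases j <;>
      simp [x, H.irrefl, hAab, hAac, hAbc, hAab.symm, hAac.symm, hAbc.symm,
        hab, hac, hbc, hab.symm, hac.symm, hbc.symm, Fin.ext_iff]
  · intro i v hv
    fin_cases i <;> rw [← SimpleGraph.mem_neighborFinset] at hv
    · replace hv : v ∈ H.neighborFinset a := hv
      rw [hNa] at hv
      rcases Finset.mem_insert.mp hv with rfl | hv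
      · exact ⟨1, rfl⟩
      · exact ⟨2, by rw [hx2, Finset.mem_singleton.mp hv]⟩
    · replace hv : v ∈ H.neighborFinset b := hv
      rw [hNb] at hv
      rcases Finset.mem_insert.mp hv with rfl | hv
      · exact ⟨0, rfl⟩
      · exact ⟨2, by rw [hx2, Finset.mem_singleton.mp hv]⟩
    · replace hv : v ∈ H.neighborFinset c := hv
      rw [hNc] at hv
      rcases Finset.mem_insert.mp hv with rfl | hv
      · exact ⟨0, rfl⟩
      · exact ⟨1, by rw [hx1, Finset.mem_singleton.mp hv]⟩
  · intro v hv
    have hva : v ≠ a := hv 0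
    have hvb : v ≠ b := hv 1
    have hvc : v ≠ c := hv 2
    obtain ⟨w, hw⟩ := pendant_neighbor H (hout v hva hvb hvc)
    have hAvw : H.Adj v w := (nf_singleton_adj H hw).mpr rfl
    refine ⟨w, ?_, ?_⟩
    · intro i
      fin_cases i
      · show w ≠ a
        intro h
        rw [h] at hAvw
        have : v ∈ H.neighborFinset a := (SimpleGraph.mem_neighborFinset _ _ _).mpr hAvw.symm
        rw [hNa] at this
        rcases Finset.mem_insert.mp this with rfl | h2
        · exact hvb rfl
        · exact hvc (Finset.mem_singleton.mp h2)
      · show w ≠ b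
        intro h
        rw [h] at hAvw
        have : v ∈ H.neighborFinset b := (SimpleGraph.mem_neighborFinset _ _ _).mpr hAvw.symm
        rw [hNb] at this
        rcases Finset.mem_insert.mp this with rfl | h2
        · exact hva rfl
        · exact hvc (Finset.mem_singleton.mp h2)
      · show w ≠ c
        intro h
        rw [h] at hAvw
        have : v ∈ H.neighborFinset c := (SimpleGraph.mem_neighborFinset _ _ _).mpr hAvw.symm
        rw [hNc] at this
        rcases Finset.mem_insert.mp this with rfl | h2
        · exact hva rfl
        · exact hvb (Finset.mem_singleton.mp h2)
    · exact Set.ext fun z => by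
        rw [SimpleGraph.mem_neighborSet, nf_singleton_adj H hw, Set.mem_singleton_iff]
  · obtain ⟨k, rfl⟩ := hev
    have : (k + k) / 2 = k := by omega
    rw [hV, this]
    omega


lemma two_mem {V : Type*} [DecidableEq V] {s : Finset V} (h : s.card = 2) {b : V} (hb : b ∈ s) :
    ∃ u, u ≠ b ∧ s = {b, u} := by
  obtain ⟨y, z, hyz, rfl⟩ := Finset.card_eq_two.mp h
  rcases Finset.mem_insert.mp hb with rfl | hb'
  · exact ⟨z, fun h => hyz h.symm, rfl⟩
  · rw [Finset.mem_singleton.mp hb']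
    exact ⟨y, fun h => hyz h, Finset.pair_comm y z⟩

lemma path_case (p : ℕ) (hp : 4 ≤ p) (hev : Even p) {V : Type*} [Fintype V] [DecidableEq V]
    (hV : Fintype.card V = p + 3) (H : SimpleGraph V) [DecidableRel H.Adj]
    (a b c : V) (hab : a ≠ b) (hac : a ≠ c) (hbc : b ≠ c)
    (hAab : H.Adj a b) (hAbc : H.Adj b c) (hNac : ¬ H.Adj a c)
    (hda : H.degree a = 2) (hdb : H.degree b = 2) (hdc : H.degree c = 2)
    (hout : ∀ v, v ≠ a → v ≠ b → v ≠ c → H.degree v = 1) :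
    Nonempty (H ≃g pathGraph 5 ⊕g unionComplete ((p - 2) / 2) 2) := by
  classical
  have hNb : H.neighborFinset b = {a, c} := by
    refine (Finset.eq_of_subset_of_card_le ?_ ?_).symm
    · intro z hz
      rcases Finset.mem_insert.mp hz with rfl | hz'
      · exact (SimpleGraph.mem_neighborFinset _ _ _).mpr hAab.symm
      · rw [Finset.mem_singleton.mp hz']
        exact (SimpleGraph.mem_neighborFinset _ _ _).mpr hAbc
    · rw [SimpleGraph.card_neighborFinset_eq_degree, hdb, Finset.card_insert_of_notMem
        (by simp [hac]), Finset.card_singleton]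
  obtain ⟨u, hub, hNa⟩ := two_mem (by rw [SimpleGraph.card_neighborFinset_eq_degree, hda])
    ((SimpleGraph.mem_neighborFinset _ _ _).mpr hAab)
  obtain ⟨w, hwb, hNc⟩ := two_mem (by rw [SimpleGraph.card_neighborFinset_eq_degree, hdc])
    ((SimpleGraph.mem_neighborFinset _ _ _).mpr hAbc.symm)
  have hAau : H.Adj a u := by
    rw [← SimpleGraph.mem_neighborFinset, hNa]; simp
  have hAcw : H.Adj c w := by
    rw [← SimpleGraph.mem_neighborFinset, hNc]; simp
  have hua : u ≠ a := fun h => H.irrefl (h ▸ hAau)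
  have huc : u ≠ c := fun h => hNac (h ▸ hAau)
  have hwc : w ≠ c := fun h => H.irrefl (h ▸ hAcw)
  have hwa : w ≠ a := fun h => hNac (h ▸ hAcw).symm
  have hdu : H.degree u = 1 := hout u hua hub huc
  have hdw : H.degree w = 1 := hout w hwa hwb hwc
  have hNu : H.neighborFinset u = {a} := by
    refine (Finset.eq_of_subset_of_card_le ?_ ?_).symm
    · intro z hz
      rw [Finset.mem_singleton.mp hz]
      exact (SimpleGraph.mem_neighborFinset _ _ _).mpr hAau.symm
    · rw [SimpleGraph.card_neighborFinset_eq_degree, hdu, Finset.card_singleton]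
  have hNw : H.neighborFinset w = {c} := by
    refine (Finset.eq_of_subset_of_card_le ?_ ?_).symm
    · intro z hz
      rw [Finset.mem_singleton.mp hz]
      exact (SimpleGraph.mem_neighborFinset _ _ _).mpr hAcw.symm
    · rw [SimpleGraph.card_neighborFinset_eq_degree, hdw, Finset.card_singleton]
  have huw : u ≠ w := by
    intro h
    have : H.Adj u c := by rw [h]; exact hAcw.symm
    rw [nf_singleton_adj H hNu] at this
    exact hac this.symm
  -- negative adjacencies
  have nAua : ∀ z, z ≠ a → ¬ H.Adj u z := by
    intro z hz h
    exact hz ((nf_singleton_adj H hNu).mp h)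
  have nAwc : ∀ z, z ≠ c → ¬ H.Adj w z := by
    intro z hz h
    exact hz ((nf_singleton_adj H hNw).mp h)
  have nAaw : ¬ H.Adj a w := by
    intro h
    have : w ∈ H.neighborFinset a := (SimpleGraph.mem_neighborFinset _ _ _).mpr h
    rw [hNa] at this
    rcases Finset.mem_insert.mp this with rfl | h2
    · exact hwb rfl
    · exact huw (Finset.mem_singleton.mp h2).symm
  have nAbw : ¬ H.Adj b w := by
    intro h
    have : w ∈ H.neighborFinset b := (SimpleGraph.mem_neighborFinset _ _ _).mpr h
    rw [hNb] at this
    rcases Finset.mem_insert.mp this with rfl | h2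
    · exact hwa rfl
    · exact hwc (Finset.mem_singleton.mp h2)
  set x : Fin 5 → V := ![u, a, b, c, w] with hx
  have hinj : Function.Injective x := by
    intro i j hij
    fin_cases i <;> fin_cases j
    · rfl
    · exact (hua hij).elim
    · exact (hub hij).elim
    · exact (huc hij).elim
    · exact (huw hij).elim
    · exact (hua hij.symm).elim
    · rfl
    · exact (hab hij).elim
    · exact (hac hij).elim
    · exact (hwa hij.symm).elim
    · exact (hub hij.symm).elim
    · exact (hab hij.symm).elim
    · rfl
    · exact (hbc hij).elim
    · exact (hwb hij.symm).elim
    · exact (huc hij.symm).elim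
    · exact (hac hij.symm).elim
    · exact (hbc hij.symm).elim
    · rfl
    · exact (hwc hij.symm).elim
    · exact (huw hij.symm).elim
    · exact (hwa hij).elim
    · exact (hwb hij).elim
    · exact (hwc hij).elim
    · rfl
  have P : ∀ (i j : Fin 5), (i.val + 1 = j.val ∨ j.val + 1 = i.val) → (pathGraph 5).Adj i j :=
    fun i j h => pathGraph_adj.mpr h
  have nP : ∀ (i j : Fin 5), ¬ (i.val + 1 = j.val ∨ j.val + 1 = i.val) → ¬ (pathGraph 5).Adj i j :=
    fun i j h hadj => h (pathGraph_adj.mp hadj)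
  refine assemble H _ x hinj ?_ ?_ ?_ ?_
  · intro i j
    fin_cases i <;> fin_cases j
    · exact iff_of_false H.irrefl (nP _ _ (by norm_num))
    · exact iff_of_true hAau.symm (P _ _ (by norm_num))
    · exact iff_of_false (nAua b hab.symm) (nP _ _ (by norm_num))
    · exact iff_of_false (nAua c hac.symm) (nP _ _ (by norm_num))
    · exact iff_of_false (nAua w hwa) (nP _ _ (by norm_num))
    · exact iff_of_true hAau (P _ _ (by norm_num))
    · exact iff_of_false H.irrefl (nP _ _ (by norm_num))
    · exact iff_of_true hAab (P _ _ (by norm_num))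
    · exact iff_of_false hNac (nP _ _ (by norm_num))
    · exact iff_of_false nAaw (nP _ _ (by norm_num))
    · exact iff_of_false (fun h => nAua b hab.symm h.symm) (nP _ _ (by norm_num))
    · exact iff_of_true hAab.symm (P _ _ (by norm_num))
    · exact iff_of_false H.irrefl (nP _ _ (by norm_num))
    · exact iff_of_true hAbc (P _ _ (by norm_num))
    · exact iff_of_false nAbw (nP _ _ (by norm_num))
    · exact iff_of_false (fun h => nAua c hac.symm h.symm) (nP _ _ (by norm_num))
    · exact iff_of_false (fun h => hNac h.symm) (nP _ _ (by norm_num))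
    · exact iff_of_true hAbc.symm (P _ _ (by norm_num))
    · exact iff_of_false H.irrefl (nP _ _ (by norm_num))
    · exact iff_of_true hAcw (P _ _ (by norm_num))
    · exact iff_of_false (nAwc u huc) (nP _ _ (by norm_num))
    · exact iff_of_false (nAwc a hac) (nP _ _ (by norm_num))
    · exact iff_of_false (nAwc b hbc) (nP _ _ (by norm_num))
    · exact iff_of_true hAcw.symm (P _ _ (by norm_num))
    · exact iff_of_false H.irrefl (nP _ _ (by norm_num))
  · intro i v hv
    fin_cases i
    · exact ⟨1, (nf_singleton_adj H hNu).mp hv⟩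
    · have : v ∈ H.neighborFinset a := (SimpleGraph.mem_neighborFinset _ _ _).mpr hv
      rw [hNa] at this
      rcases Finset.mem_insert.mp this with rfl | h2
      · exact ⟨2, rfl⟩
      · exact ⟨0, Finset.mem_singleton.mp h2⟩
    · have : v ∈ H.neighborFinset b := (SimpleGraph.mem_neighborFinset _ _ _).mpr hv
      rw [hNb] at this
      rcases Finset.mem_insert.mp this with rfl | h2
      · exact ⟨1, rfl⟩
      · exact ⟨3, Finset.mem_singleton.mp h2⟩
    · have : v ∈ H.neighborFinset c := (SimpleGraph.mem_neighborFinset _ _ _).mpr hv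
      rw [hNc] at this
      rcases Finset.mem_insert.mp this with rfl | h2
      · exact ⟨2, rfl⟩
      · exact ⟨4, Finset.mem_singleton.mp h2⟩
    · exact ⟨3, (nf_singleton_adj H hNw).mp hv⟩
  · intro v hv
    have hvu : v ≠ u := hv 0
    have hva : v ≠ a := hv 1
    have hvb : v ≠ b := hv 2
    have hvc : v ≠ c := hv 3
    have hvw : v ≠ w := hv 4
    obtain ⟨z, hNv⟩ := Finset.card_eq_one.mp
      ((SimpleGraph.card_neighborFinset_eq_degree H v) ▸ hout v hva hvb hvc)
    have hAvz : H.Adj v z := (nf_singleton_adj H hNv).mpr rfl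
    refine ⟨z, ?_, ?_⟩
    · intro i
      fin_cases i
      · show z ≠ u
        intro h; rw [h] at hAvz
        exact hva ((nf_singleton_adj H hNu).mp hAvz.symm)
      · show z ≠ a
        intro h; rw [h] at hAvz
        have : v ∈ H.neighborFinset a := (SimpleGraph.mem_neighborFinset _ _ _).mpr hAvz.symm
        rw [hNa] at this
        rcases Finset.mem_insert.mp this with rfl | h2
        · exact hvb rfl
        · exact hvu (Finset.mem_singleton.mp h2)
      · show z ≠ b
        intro h; rw [h] at hAvz
        have : v ∈ H.neighborFinset b := (SimpleGraph.mem_neighborFinset _ _ _).mpr hAvz.symm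
        rw [hNb] at this
        rcases Finset.mem_insert.mp this with rfl | h2
        · exact hva rfl
        · exact hvc (Finset.mem_singleton.mp h2)
      · show z ≠ c
        intro h; rw [h] at hAvz
        have : v ∈ H.neighborFinset c := (SimpleGraph.mem_neighborFinset _ _ _).mpr hAvz.symm
        rw [hNc] at this
        rcases Finset.mem_insert.mp this with rfl | h2
        · exact hvb rfl
        · exact hvw (Finset.mem_singleton.mp h2)
      · show z ≠ w
        intro h; rw [h] at hAvz
        exact hvc ((nf_singleton_adj H hNw).mp hAvz.symm)
    · exact Set.ext fun y => by
        rw [SimpleGraph.mem_neighborSet, nf_singleton_adj H hNv, Set.mem_singleton_iff]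
  · obtain ⟨k, rfl⟩ := hev
    rw [hV]
    omega


lemma classify (p : ℕ) (hp : 4 ≤ p) (hev : Even p) {V : Type*} [Fintype V] [DecidableEq V]
    (hV : Fintype.card V = p + 3) (H : SimpleGraph V) [DecidableRel H.Adj]
    (hsum : ∑ v, H.degree v = p + 6)
    (hkey : ∀ x y : V, x ≠ y → ¬ H.Adj x y →
      4 ≤ ({x, y} ∪ H.neighborFinset x ∪ H.neighborFinset y).card) :
    Nonempty (H ≃g (⊤ : SimpleGraph (Fin 3)) ⊕g unionComplete (p / 2) 2) ∨
      Nonempty (H ≃g pathGraph 5 ⊕g unionComplete ((p - 2) / 2) 2) := by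
  classical
  -- minimum degree at least one
  have h1 : ∀ v : V, 1 ≤ H.degree v := by
    intro v
    by_contra h
    have hdv : H.degree v = 0 := by omega
    have hNv : H.neighborFinset v = ∅ := Finset.card_eq_zero.mp
      ((H.card_neighborFinset_eq_degree v) ▸ hdv)
    have h2 : ∀ y : V, y ≠ v → 2 ≤ H.degree y := by
      intro y hy
      have hnadj : ¬ H.Adj v y := by
        intro h
        have : y ∈ H.neighborFinset v := (SimpleGraph.mem_neighborFinset _ _ _).mpr h
        rw [hNv] at this
        exact absurd this (Finset.notMem_empty y)
      have := hkey v y hy.symm hnadj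
      have hle : ({v, y} ∪ H.neighborFinset v ∪ H.neighborFinset y).card ≤ 2 + H.degree y := by
        calc ({v, y} ∪ H.neighborFinset v ∪ H.neighborFinset y).card
            ≤ ({v, y} ∪ H.neighborFinset v).card + (H.neighborFinset y).card :=
              Finset.card_union_le _ _
          _ ≤ (({v, y} : Finset V).card + (H.neighborFinset v).card) + (H.neighborFinset y).card := by
              have := Finset.card_union_le ({v, y} : Finset V) (H.neighborFinset v)
              omega
          _ ≤ 2 + H.degree y := by
              rw [hNv, Finset.card_empty, H.card_neighborFinset_eq_degree]
              have : ({v, y} : Finset V).card ≤ 2 := Finset.card_insert_le _ _ |>.trans (by simp)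
              omega
      omega
    have hsum2 : 2 * (p + 2) ≤ ∑ y : V, H.degree y := by
      have hcard : (univ.erase v).card = p + 2 := by
        rw [Finset.card_erase_of_mem (Finset.mem_univ v), Finset.card_univ, hV]
        omega
      calc 2 * (p + 2) = ∑ _y ∈ univ.erase v, 2 := by rw [Finset.sum_const, hcard]; ring
        _ ≤ ∑ y ∈ univ.erase v, H.degree y :=
            Finset.sum_le_sum (fun y hy => h2 y (Finset.ne_of_mem_erase hy))
        _ ≤ ∑ y : V, H.degree y := Finset.sum_le_sum_of_subset (Finset.subset_univ _)
    omega
  -- no two pendant vertices share their neighbor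
  have hpend_distinct : ∀ u v a : V, u ≠ v → H.neighborFinset u = {a} →
      H.neighborFinset v = {a} → False := by
    intro u v a huv hu hv
    have hAua : H.Adj u a := by rw [← SimpleGraph.mem_neighborFinset, hu]; simp
    have hAva : H.Adj v a := by rw [← SimpleGraph.mem_neighborFinset, hv]; simp
    have hnadj : ¬ H.Adj u v := by
      intro h
      have : v ∈ H.neighborFinset u := (SimpleGraph.mem_neighborFinset _ _ _).mpr h
      rw [hu, Finset.mem_singleton] at this
      subst this
      exact H.irrefl hAva
    have := hkey u v huv hnadj
    have hsub : ({u, v} ∪ H.neighborFinset u ∪ H.neighborFinset v) ⊆ {u, v, a} := by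
      rw [hu, hv]
      intro z hz
      simp only [Finset.mem_union, Finset.mem_insert, Finset.mem_singleton] at hz ⊢
      tauto
    have hc : ({u, v, a} : Finset V).card ≤ 3 := by
      apply (Finset.card_insert_le _ _).trans
      have := Finset.card_insert_le v ({a} : Finset V)
      simp at this ⊢
      omega
    have := Finset.card_le_card hsub
    omega
  set T : Finset V := univ.filter (fun v => 2 ≤ H.degree v) with hT
  have hTd : ∀ v, v ∉ T → H.degree v = 1 := by
    intro v hv
    have := h1 v
    simp only [hT, Finset.mem_filter, Finset.mem_univ, true_and, not_le] at hv
    omega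
  have hsumT : ∑ v ∈ T, H.degree v = T.card + 3 := by
    have hsub : T ⊆ univ := Finset.subset_univ T
    have hsd : ∑ v ∈ univ \ T, H.degree v + ∑ v ∈ T, H.degree v = p + 6 := by
      rw [← hsum]
      exact Finset.sum_sdiff hsub
    have hones : ∑ v ∈ univ \ T, H.degree v = (univ \ T).card := by
      rw [Finset.card_eq_sum_ones]
      exact Finset.sum_congr rfl (fun v hv => hTd v (Finset.mem_sdiff.mp hv).2)
    have hcsd : (univ \ T).card = p + 3 - T.card := by
      rw [Finset.card_sdiff_of_subset hsub, Finset.card_univ, hV]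
    have hTle : T.card ≤ p + 3 := by
      rw [← hV, ← Finset.card_univ]
      exact Finset.card_le_card hsub
    omega
  -- each vertex of T has at most one pendant neighbor
  have hTbound : ∀ a ∈ T, H.degree a ≤ (H.neighborFinset a ∩ T).card + 1 := by
    intro a _
    have hsd : (H.neighborFinset a \ T).card ≤ 1 := by
      rw [Finset.card_le_one]
      intro u hu v hv
      by_contra huv
      have hu' : H.neighborFinset u = {a} := by
        obtain ⟨hu1, hu2⟩ := Finset.mem_sdiff.mp hu
        obtain ⟨z, hz⟩ := Finset.card_eq_one.mp ((H.card_neighborFinset_eq_degree u) ▸ hTd u hu2)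
        have : a ∈ H.neighborFinset u := (SimpleGraph.mem_neighborFinset _ _ _).mpr
          ((SimpleGraph.mem_neighborFinset _ _ _).mp hu1).symm
        rw [hz, Finset.mem_singleton] at this
        rw [hz, this]
      have hv' : H.neighborFinset v = {a} := by
        obtain ⟨hv1, hv2⟩ := Finset.mem_sdiff.mp hv
        obtain ⟨z, hz⟩ := Finset.card_eq_one.mp ((H.card_neighborFinset_eq_degree v) ▸ hTd v hv2)
        have : a ∈ H.neighborFinset v := (SimpleGraph.mem_neighborFinset _ _ _).mpr
          ((SimpleGraph.mem_neighborFinset _ _ _).mp hv1).symm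
        rw [hz, Finset.mem_singleton] at this
        rw [hz, this]
      exact hpend_distinct u v a huv hu' hv'
    have := Finset.card_inter_add_card_sdiff (H.neighborFinset a) T
    rw [H.card_neighborFinset_eq_degree] at this
    omega
  have hTsize : ∀ a ∈ T, H.degree a ≤ T.card := by
    intro a ha
    have h2 := hTbound a ha
    have hsub : H.neighborFinset a ∩ T ⊆ T.erase a := by
      intro z hz
      obtain ⟨hz1, hz2⟩ := Finset.mem_inter.mp hz
      refine Finset.mem_erase.mpr ⟨?_, hz2⟩
      intro hza
      subst hza
      exact H.irrefl ((SimpleGraph.mem_neighborFinset _ _ _).mp hz1)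
    have := Finset.card_le_card hsub
    rw [Finset.card_erase_of_mem ha] at this
    have : T.card ≥ 1 := Finset.card_pos.mpr ⟨a, ha⟩
    omega
  have hT3 : T.card = 3 := by
    have hlow : 2 * T.card ≤ ∑ v ∈ T, H.degree v := by
      calc 2 * T.card = ∑ _v ∈ T, 2 := by rw [Finset.sum_const]; ring
        _ ≤ ∑ v ∈ T, H.degree v := Finset.sum_le_sum (fun v hv => by
            simp only [hT, Finset.mem_filter] at hv; exact hv.2)
    have hhigh : ∑ v ∈ T, H.degree v ≤ T.card * T.card :=
      calc ∑ v ∈ T, H.degree v ≤ ∑ _v ∈ T, T.card := Finset.sum_le_sum hTsize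
        _ = T.card * T.card := by rw [Finset.sum_const]; ring
    nlinarith [hsumT]
  obtain ⟨a, b, c, hab, hac, hbc, hTabc⟩ := Finset.card_eq_three.mp hT3
  have haT : a ∈ T := by rw [hTabc]; simp
  have hbT : b ∈ T := by rw [hTabc]; simp
  have hcT : c ∈ T := by rw [hTabc]; simp
  have hsum3 : H.degree a + H.degree b + H.degree c = 6 := by
    have : ∑ v ∈ T, H.degree v = H.degree a + H.degree b + H.degree c := by
      rw [hTabc]
      rw [Finset.sum_insert (by simp [hab, hac]), Finset.sum_insert (by simp [hbc]),
        Finset.sum_singleton]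
      ring
    rw [this, hT3] at hsumT
    omega
  have h2a : 2 ≤ H.degree a := by simpa [hT] using haT
  have h2b : 2 ≤ H.degree b := by simpa [hT] using hbT
  have h2c : 2 ≤ H.degree c := by simpa [hT] using hcT
  have hda3 : H.degree a ≤ 3 := (hTsize a haT).trans (le_of_eq hT3)
  have hdb3 : H.degree b ≤ 3 := (hTsize b hbT).trans (le_of_eq hT3)
  have hdc3 : H.degree c ≤ 3 := (hTsize c hcT).trans (le_of_eq hT3)
  have hda : H.degree a = 2 := by omega
  have hdb : H.degree b = 2 := by omega
  have hdc : H.degree c = 2 := by omega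
  have hout : ∀ v, v ≠ a → v ≠ b → v ≠ c → H.degree v = 1 := by
    intro v hva hvb hvc
    apply hTd
    rw [hTabc]
    simp [hva, hvb, hvc]
  -- each of a, b, c has a neighbor inside T
  have hTnbr : ∀ v ∈ T, ∃ t ∈ T, t ≠ v ∧ H.Adj v t := by
    intro v hv
    have := hTbound v hv
    have h2v : 2 ≤ H.degree v := by simpa [hT] using hv
    have hpos : 0 < (H.neighborFinset v ∩ T).card := by omega
    obtain ⟨t, ht⟩ := Finset.card_pos.mp hpos
    obtain ⟨ht1, ht2⟩ := Finset.mem_inter.mp ht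
    have hadj := (SimpleGraph.mem_neighborFinset _ _ _).mp ht1
    exact ⟨t, ht2, fun h => H.irrefl (h ▸ hadj), hadj⟩
  have hnbr_ab : ∀ v, v ∈ T → (H.Adj v a ∨ H.Adj v b ∨ H.Adj v c) := by
    intro v hv
    obtain ⟨t, htT, _, hadj⟩ := hTnbr v hv
    rw [hTabc] at htT
    simp only [Finset.mem_insert, Finset.mem_singleton] at htT
    rcases htT with rfl | rfl | rfl
    · exact Or.inl hadj
    · exact Or.inr (Or.inl hadj)
    · exact Or.inr (Or.inr hadj)
  -- case analysis on the adjacency pattern inside T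
  by_cases hAab : H.Adj a b <;> by_cases hAbc : H.Adj b c <;> by_cases hAac : H.Adj a c
  · -- triangle
    left
    have hNa : H.neighborFinset a = {b, c} := by
      refine (Finset.eq_of_subset_of_card_le ?_ ?_).symm
      · intro z hz
        rcases Finset.mem_insert.mp hz with rfl | hz'
        · exact (SimpleGraph.mem_neighborFinset _ _ _).mpr hAab
        · rw [Finset.mem_singleton.mp hz']
          exact (SimpleGraph.mem_neighborFinset _ _ _).mpr hAac
      · rw [H.card_neighborFinset_eq_degree, hda,
          Finset.card_insert_of_notMem (by simp [hbc]), Finset.card_singleton]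
    have hNb : H.neighborFinset b = {a, c} := by
      refine (Finset.eq_of_subset_of_card_le ?_ ?_).symm
      · intro z hz
        rcases Finset.mem_insert.mp hz with rfl | hz'
        · exact (SimpleGraph.mem_neighborFinset _ _ _).mpr hAab.symm
        · rw [Finset.mem_singleton.mp hz']
          exact (SimpleGraph.mem_neighborFinset _ _ _).mpr hAbc
      · rw [H.card_neighborFinset_eq_degree, hdb,
          Finset.card_insert_of_notMem (by simp [hac]), Finset.card_singleton]
    have hNc : H.neighborFinset c = {a, b} := by
      refine (Finset.eq_of_subset_of_card_le ?_ ?_).symm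
      · intro z hz
        rcases Finset.mem_insert.mp hz with rfl | hz'
        · exact (SimpleGraph.mem_neighborFinset _ _ _).mpr hAac.symm
        · rw [Finset.mem_singleton.mp hz']
          exact (SimpleGraph.mem_neighborFinset _ _ _).mpr hAbc.symm
      · rw [H.card_neighborFinset_eq_degree, hdc,
          Finset.card_insert_of_notMem (by simp [hab]), Finset.card_singleton]
    exact triangle_case p hp hev hV H a b c hab hac hbc hNa hNb hNc hout
  · -- edges ab, bc missing ac : path a-b-c
    right
    exact path_case p hp hev hV H a b c hab hac hbc hAab hAbc hAac hda hdb hdc hout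
  · -- edges ab, ac missing bc : path b-a-c
    right
    refine path_case p hp hev hV H b a c hab.symm hbc hac hAab.symm hAac hAbc ?_ ?_ ?_ ?_
    · exact hdb
    · exact hda
    · exact hdc
    · intro v h1' h2' h3'
      exact hout v h2' h1' h3'
  · -- only edge ab: c has no neighbor in T
    exfalso
    rcases hnbr_ab c hcT with h | h | h
    · exact hAac h.symm
    · exact hAbc h.symm
    · exact H.irrefl h
  · -- edges bc, ac missing ab : path a-c-b
    right
    refine path_case p hp hev hV H a c b hac hab hbc.symm hAac hAbc.symm hAab ?_ ?_ ?_ ?_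
    · exact hda
    · exact hdc
    · exact hdb
    · intro v h1' h2' h3'
      exact hout v h1' h3' h2'
  · -- only edge bc: a has no neighbor in T
    exfalso
    rcases hnbr_ab a haT with h | h | h
    · exact H.irrefl h
    · exact hAab h
    · exact hAac h
  · -- only edge ac: b has no neighbor in T
    exfalso
    rcases hnbr_ab b hbT with h | h | h
    · exact hAab h.symm
    · exact H.irrefl h
    · exact hAbc h
  · -- no edges in T: a has no neighbor in T
    exfalso
    rcases hnbr_ab a haT with h | h | h
    · exact H.irrefl h
    · exact hAab h
    · exact hAac h


def isoCompl {α β : Type*} {A : SimpleGraph α} {B : SimpleGraph β} (e : A ≃g B) : Aᶜ ≃g Bᶜ where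
  toEquiv := e.toEquiv
  map_rel_iff' := by
    intro a b
    simp only [SimpleGraph.compl_adj]
    exact and_congr e.toEquiv.injective.ne_iff (not_congr e.map_adj_iff)


theorem stmt10 (p : ℕ) (hp : 4 ≤ p) (hev : Even p) {V : Type*} [Fintype V]
    (hV : Fintype.card V = p + 3) (G : SimpleGraph V) (hfree : ¬ G.ContainsBook p)
    (hsize : G.edgeSet.ncard = p * (p + 4) / 2) :
    Nonempty (G ≃g SimpleGraph.join (⊥ : SimpleGraph (Fin 3)) (unionComplete (p / 2) 2)ᶜ) ∨
      Nonempty (G ≃g SimpleGraph.join (SimpleGraph.pathGraph 5)ᶜ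
        (unionComplete ((p - 2) / 2) 2)ᶜ) := by
  classical
  rw [← SimpleGraph.coe_edgeFinset, Set.ncard_coe_finset] at hsize
  have htop : G ⊔ Gᶜ = ⊤ := sup_compl_eq_top
  have hsets : G.edgeSet ∪ Gᶜ.edgeSet = (⊤ : SimpleGraph V).edgeSet := by
    rw [← SimpleGraph.edgeSet_sup, htop]
  have hdisS : Disjoint G.edgeSet Gᶜ.edgeSet :=
    SimpleGraph.disjoint_edgeSet.mpr disjoint_compl_right
  have hncardG : G.edgeSet.ncard = G.edgeFinset.card := by
    rw [← SimpleGraph.coe_edgeFinset, Set.ncard_coe_finset]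
  have hncardGc : Gᶜ.edgeSet.ncard = Gᶜ.edgeFinset.card := by
    rw [← SimpleGraph.coe_edgeFinset, Set.ncard_coe_finset]
  have hncardT : (⊤ : SimpleGraph V).edgeSet.ncard = (p + 3).choose 2 := by
    rw [← SimpleGraph.coe_edgeFinset, Set.ncard_coe_finset,
      SimpleGraph.card_edgeFinset_top_eq_card_choose_two, hV]
  have hcards : G.edgeFinset.card + Gᶜ.edgeFinset.card = (p + 3).choose 2 := by
    rw [← hncardG, ← hncardGc, ← hncardT, ← hsets]
    exact (Set.ncard_union_eq hdisS (Set.toFinite _) (Set.toFinite _)).symm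
  have hch : 2 * ((p + 3).choose 2) = (p + 3) * (p + 2) := by
    rw [Nat.choose_two_right]
    have h : (p + 3) * (p + 3 - 1) = (p + 3) * (p + 2) := by norm_num
    rw [h]
    refine Nat.mul_div_cancel' ?_
    have := Nat.even_mul_succ_self (p + 2)
    rw [show (p + 2) * (p + 2 + 1) = (p + 3) * (p + 2) by ring] at this
    exact this.two_dvd
  have h2G : 2 * G.edgeFinset.card = p * (p + 4) := by
    rw [hsize]
    refine Nat.mul_div_cancel' ?_
    obtain ⟨k, rfl⟩ := hev
    exact Dvd.intro (k * (k + k + 4)) (by ring)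
  have hiden : (p + 3) * (p + 2) = p * (p + 4) + (p + 6) := by ring
  have hdeg := Gᶜ.sum_degrees_eq_twice_card_edges
  have hsum : ∑ v, Gᶜ.degree v = p + 6 := by omega
  have hkey : ∀ x y : V, x ≠ y → ¬ Gᶜ.Adj x y →
      4 ≤ ({x, y} ∪ Gᶜ.neighborFinset x ∪ Gᶜ.neighborFinset y).card := by
    intro x y hxy hnadj
    have hGadj : G.Adj x y := by
      by_contra hG
      exact hnadj ((G.compl_adj x y).mpr ⟨hxy, hG⟩)
    have hcn : (G.commonNeighbors x y).ncard ≤ p - 1 := by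
      by_contra h
      push_neg at h
      exact hfree ⟨x, y, hGadj, by omega⟩
    have hcnf : (G.commonNeighbors x y).ncard
        = (G.neighborFinset x ∩ G.neighborFinset y).card := by
      rw [← Set.ncard_coe_finset]
      congr 1
      rw [Finset.coe_inter, SimpleGraph.neighborFinset_def, SimpleGraph.neighborFinset_def,
        Set.coe_toFinset, Set.coe_toFinset]
      rfl
    set A : Finset V := {x, y} ∪ Gᶜ.neighborFinset x ∪ Gᶜ.neighborFinset y with hA
    set C : Finset V := G.neighborFinset x ∩ G.neighborFinset y with hC
    have hun : A ∪ C = univ := by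
      apply Finset.eq_univ_of_forall
      intro z
      by_cases hzA : z ∈ A
      · exact Finset.mem_union_left _ hzA
      · refine Finset.mem_union_right _ ?_
        simp only [hA, Finset.mem_union, Finset.mem_insert, Finset.mem_singleton,
          SimpleGraph.mem_neighborFinset, not_or] at hzA
        obtain ⟨⟨⟨hzx, hzy⟩, hnx⟩, hny⟩ := hzA
        rw [SimpleGraph.compl_adj, not_and, not_not] at hnx hny
        rw [hC, Finset.mem_inter, SimpleGraph.mem_neighborFinset, SimpleGraph.mem_neighborFinset]
        exact ⟨hnx (Ne.symm hzx), hny (Ne.symm hzy)⟩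
    have hdisAC : Disjoint A C := by
      rw [Finset.disjoint_right]
      intro z hzC hzA
      rw [hC, Finset.mem_inter, SimpleGraph.mem_neighborFinset,
        SimpleGraph.mem_neighborFinset] at hzC
      obtain ⟨hax, hay⟩ := hzC
      simp only [hA, Finset.mem_union, Finset.mem_insert, Finset.mem_singleton,
        SimpleGraph.mem_neighborFinset] at hzA
      rcases hzA with ((rfl | rfl) | hc) | hc
      · exact G.irrefl hax
      · exact G.irrefl hay
      · exact ((G.compl_adj _ _).mp hc).2 hax
      · exact ((G.compl_adj _ _).mp hc).2 hay
    have hcardAC : A.card + C.card = p + 3 := by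
      rw [← Finset.card_union_of_disjoint hdisAC, hun, Finset.card_univ, hV]
    omega
  rcases classify p hp hev hV Gᶜ hsum hkey with (⟨e⟩ | ⟨e⟩)
  · left
    obtain ⟨e⟩ := e
    have e2 := isoCompl e
    rw [compl_compl] at e2
    have hEq : SimpleGraph.join (⊥ : SimpleGraph (Fin 3)) (unionComplete (p / 2) 2)ᶜ
        = ((⊤ : SimpleGraph (Fin 3)) ⊕g unionComplete (p / 2) 2)ᶜ := by
      rw [SimpleGraph.join, compl_compl, compl_bot]
    rw [hEq]
    exact ⟨e2⟩
  · right
    obtain ⟨e⟩ := e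
    have e2 := isoCompl e
    rw [compl_compl] at e2
    have hEq : SimpleGraph.join (SimpleGraph.pathGraph 5)ᶜ (unionComplete ((p - 2) / 2) 2)ᶜ
        = (pathGraph 5 ⊕g unionComplete ((p - 2) / 2) 2)ᶜ := by
      rw [SimpleGraph.join, compl_compl, compl_compl]
    rw [hEq]
    exact ⟨e2⟩
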